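/- There exists t : ℕ → ℕ such that for every continuous f : ℝ × ℝ → ℝ satisfying |f(x,y) − f(x,z)| ≤ |y − z| and |f(x,y)| ≤ 1 for all x, y, z ∈ [−1,1], every integer k ≥ 1, every x ∈ [0,1], and all K, L ≥ t(k): |φ_K(x) − φ_L(x)| ≤ 1/k, where (φ_n) are the Picard iterates of f. (Effective Picard theorem, first clause: the Picard iterates are uniformly Cauchy with a rate independent of f.) -/

import Mathlib

/-- The Picard iterates of `f`: `φ₀(x) = 0` and `φ_{n+1}(x) = ∫₀ˣ f(s, φ_n(s)) ds`. -/
noncomputable def picard (f : ℝ × ℝ → ℝ) : ℕ → ℝ → ℝ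
  | 0 => fun _ => 0
  | n + 1 => fun x => ∫ s in (0:ℝ)..x, f (s, picard f n s)

open MeasureTheory intervalIntegral Set in
/-- Effective Picard theorem, first clause: the Picard iterates are uniformly
Cauchy with a rate independent of `f`. -/
theorem effective_picard_cauchy :
    ∃ t : ℕ → ℕ,
      ∀ f : ℝ × ℝ → ℝ, Continuous f →
        (∀ x ∈ Set.Icc (-1:ℝ) 1, ∀ y ∈ Set.Icc (-1:ℝ) 1, ∀ z ∈ Set.Icc (-1:ℝ) 1,
          |f (x, y) - f (x, z)| ≤ |y - z| ∧ |f (x, y)| ≤ 1) →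
        ∀ k : ℕ, 1 ≤ k → ∀ x ∈ Set.Icc (0:ℝ) 1, ∀ K L : ℕ, t k ≤ K → t k ≤ L →
          |picard f K x - picard f L x| ≤ 1 / (k : ℝ) := by
  refine ⟨fun k => k + 1, ?_⟩
  intro f hf hsq k hk x hx K L hK hL
  obtain ⟨hx0, hx1⟩ := hx
  -- continuity of the iterates
  have hcont : ∀ n, Continuous (picard f n) := by
    intro n
    induction n with
    | zero => exact continuous_const
    | succ n ih =>
      show Continuous fun x => ∫ s in (0:ℝ)..x, f (s, picard f n s)
      exact intervalIntegral.continuous_primitive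
        (fun a b => ((hf.comp (continuous_id.prodMk ih)).intervalIntegrable a b)) 0
  have hcint : ∀ n a b, IntervalIntegrable (fun s => f (s, picard f n s)) volume a b :=
    fun n a b => (hf.comp (continuous_id.prodMk (hcont n))).intervalIntegrable a b
  -- a priori bound: |φ_n s| ≤ s on [0,1]
  have hbnd : ∀ n, ∀ s ∈ Icc (0:ℝ) 1, |picard f n s| ≤ s := by
    intro n
    induction n with
    | zero => intro s hs; simpa [picard] using hs.1
    | succ n ih =>
      intro s hs
      have : ‖∫ u in (0:ℝ)..s, f (u, picard f n u)‖ ≤ 1 * |s - 0| := by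
        apply intervalIntegral.norm_integral_le_of_norm_le_const
        intro u hu
        rw [Set.uIoc_of_le hs.1] at hu
        have hu1 : u ∈ Icc (0:ℝ) 1 := ⟨hu.1.le, hu.2.trans hs.2⟩
        have h1 : u ∈ Icc (-1:ℝ) 1 := ⟨by linarith [hu1.1], hu1.2⟩
        have h2 : picard f n u ∈ Icc (-1:ℝ) 1 := by
          have := (ih u hu1).trans hu1.2
          constructor <;> [linarith [abs_le.1 this |>.1]; exact (abs_le.1 this).2]
        simpa using (hsq u h1 (picard f n u) h2 0 ⟨by norm_num, by norm_num⟩).2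
      simpa [picard, abs_of_nonneg hs.1] using this
  -- consecutive differences
  have hdiff : ∀ n, ∀ y ∈ Icc (0:ℝ) 1,
      |picard f (n+1) y - picard f n y| ≤ y ^ (n+1) * (1/2 : ℝ) ^ n := by
    intro n
    induction n with
    | zero =>
      intro y hy
      have : ‖∫ u in (0:ℝ)..y, f (u, picard f 0 u)‖ ≤ 1 * |y - 0| := by
        apply intervalIntegral.norm_integral_le_of_norm_le_const
        intro u hu
        rw [Set.uIoc_of_le hy.1] at hu
        have h1 : u ∈ Icc (-1:ℝ) 1 := ⟨by linarith [hu.1], hu.2.trans hy.2⟩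
        simpa [picard] using (hsq u h1 0 ⟨by norm_num, by norm_num⟩ 0 ⟨by norm_num, by norm_num⟩).2
      simpa [picard, abs_of_nonneg hy.1] using this
    | succ n ih =>
      intro y hy
      have hsub : picard f (n+2) y - picard f (n+1) y
          = ∫ s in (0:ℝ)..y, (f (s, picard f (n+1) s) - f (s, picard f n s)) := by
        show (∫ s in (0:ℝ)..y, f (s, picard f (n+1) s))
            - (∫ s in (0:ℝ)..y, f (s, picard f n s)) = _
        rw [intervalIntegral.integral_sub (hcint (n+1) 0 y) (hcint n 0 y)]
      have hg : IntervalIntegrable (fun s : ℝ => s ^ (n+1) * (1/2:ℝ) ^ n) volume 0 y :=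
        ((continuous_pow (n+1)).mul continuous_const).intervalIntegrable 0 y
      have hb : ‖∫ s in (0:ℝ)..y, (f (s, picard f (n+1) s) - f (s, picard f n s))‖
          ≤ |∫ s in (0:ℝ)..y, s ^ (n+1) * (1/2:ℝ) ^ n| := by
        apply intervalIntegral.norm_integral_le_abs_of_norm_le _ hg
        rw [Set.uIoc_of_le hy.1]
        refine (ae_restrict_iff' measurableSet_Ioc).2 (Filter.Eventually.of_forall ?_)
        intro s hs
        have hs1 : s ∈ Icc (0:ℝ) 1 := ⟨hs.1.le, hs.2.trans hy.2⟩
        have h1 : s ∈ Icc (-1:ℝ) 1 := ⟨by linarith [hs1.1], hs1.2⟩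
        have m1 : picard f (n+1) s ∈ Icc (-1:ℝ) 1 := by
          have := (hbnd (n+1) s hs1).trans hs1.2
          exact ⟨by linarith [(abs_le.1 this).1], (abs_le.1 this).2⟩
        have m2 : picard f n s ∈ Icc (-1:ℝ) 1 := by
          have := (hbnd n s hs1).trans hs1.2
          exact ⟨by linarith [(abs_le.1 this).1], (abs_le.1 this).2⟩
        calc ‖f (s, picard f (n+1) s) - f (s, picard f n s)‖
            ≤ |picard f (n+1) s - picard f n s| :=
              (hsq s h1 (picard f (n+1) s) m1 (picard f n s) m2).1
          _ ≤ s ^ (n+1) * (1/2:ℝ) ^ n := ih s hs1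
      have hval : (∫ s in (0:ℝ)..y, s ^ (n+1) * (1/2:ℝ) ^ n)
          = y ^ (n+2) / (n+2) * (1/2:ℝ) ^ n := by
        rw [intervalIntegral.integral_mul_const, integral_pow]
        push_cast; ring
      have hle : y ^ (n+2) / (n+2) * (1/2:ℝ) ^ n ≤ y ^ (n+2) * (1/2:ℝ) ^ (n+1) := by
        have hyp : (0:ℝ) ≤ y ^ (n+2) := pow_nonneg hy.1 _
        have h2 : (2:ℝ) ≤ (n:ℝ) + 2 := by have := Nat.cast_nonneg (α := ℝ) n; linarith
        have : y ^ (n+2) / ((n:ℝ)+2) ≤ y ^ (n+2) / 2 :=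
          div_le_div_of_nonneg_left hyp (by norm_num) h2
        calc y ^ (n+2) / (n+2) * (1/2:ℝ) ^ n ≤ y ^ (n+2) / 2 * (1/2:ℝ) ^ n := by
              exact mul_le_mul_of_nonneg_right this (pow_nonneg (by norm_num) n)
          _ = y ^ (n+2) * (1/2:ℝ) ^ (n+1) := by ring
      have hnn : (0:ℝ) ≤ y ^ (n+2) / (n+2) * (1/2:ℝ) ^ n :=
        mul_nonneg (div_nonneg (pow_nonneg hy.1 _) (by positivity))
          (pow_nonneg (by norm_num) n)
      calc |picard f (n+2) y - picard f (n+1) y|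
          = ‖∫ s in (0:ℝ)..y, (f (s, picard f (n+1) s) - f (s, picard f n s))‖ := by
            rw [hsub]; rfl
        _ ≤ |∫ s in (0:ℝ)..y, s ^ (n+1) * (1/2:ℝ) ^ n| := hb
        _ = y ^ (n+2) / (n+2) * (1/2:ℝ) ^ n := by rw [hval, abs_of_nonneg hnn]
        _ ≤ y ^ (n+2) * (1/2:ℝ) ^ (n+1) := hle
  -- simplified consecutive bound
  have hdiff' : ∀ n, |picard f (n+1) x - picard f n x| ≤ (1/2:ℝ) ^ n := by
    intro n
    refine (hdiff n x ⟨hx0, hx1⟩).trans ?_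
    have : x ^ (n+1) ≤ 1 := pow_le_one₀ hx0 hx1
    calc x ^ (n+1) * (1/2:ℝ) ^ n ≤ 1 * (1/2:ℝ) ^ n :=
          mul_le_mul_of_nonneg_right this (by positivity)
      _ = (1/2:ℝ) ^ n := one_mul _
  -- telescoping
  have tele : ∀ N M : ℕ, N ≤ M →
      |picard f M x - picard f N x| ≤ 2 * (1/2:ℝ) ^ N - 2 * (1/2:ℝ) ^ M := by
    intro N M hNM
    induction M, hNM using Nat.le_induction with
    | base => simp
    | succ M hNM ih =>
      have h1 := hdiff' M
      calc |picard f (M+1) x - picard f N x|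
          ≤ |picard f (M+1) x - picard f M x| + |picard f M x - picard f N x| := by
            have := abs_sub_le (picard f (M+1) x) (picard f M x) (picard f N x); linarith
        _ ≤ (1/2:ℝ) ^ M + (2 * (1/2:ℝ) ^ N - 2 * (1/2:ℝ) ^ M) := add_le_add h1 ih
        _ = 2 * (1/2:ℝ) ^ N - 2 * (1/2:ℝ) ^ (M+1) := by ring
  -- conclude
  have hk2 : (k:ℝ) ≤ 2 ^ k := by
    exact_mod_cast (Nat.lt_two_pow_self (n := k)).le
  have hkpos : (0:ℝ) < k := by exact_mod_cast hk
  have key : ∀ N : ℕ, k + 1 ≤ N → 2 * (1/2:ℝ) ^ N ≤ 1 / k := by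
    intro N hN
    have h1 : (1/2:ℝ) ^ N ≤ (1/2:ℝ) ^ (k+1) :=
      pow_le_pow_of_le_one (by norm_num) (by norm_num) hN
    have h2 : 2 * (1/2:ℝ) ^ (k+1) = (1/2:ℝ) ^ k := by ring
    have h3 : (1/2:ℝ) ^ k ≤ 1 / k := by
      rw [div_pow, one_pow, div_le_div_iff₀ (by positivity) hkpos]
      simpa using hk2
    nlinarith [pow_nonneg (by norm_num : (0:ℝ) ≤ 1/2) N]
  rcases le_total K L with h | h
  · have := tele K L h
    have h2 : (0:ℝ) ≤ 2 * (1/2:ℝ) ^ L := by positivity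
    rw [abs_sub_comm]
    linarith [key K hK]
  · have := tele L K h
    have h2 : (0:ℝ) ≤ 2 * (1/2:ℝ) ^ K := by positivity
    linarith [key L hL]
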